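/- arXiv:1405.7129 — 3 statements merged into one kernel-verified Lean document; each statement's English description precedes it below -/
import Mathlib

section
/- Let G be a chain graph on node set V, let C ⊆ V, and let i, j be nodes. Then there is a c-connecting walk between i and j given C if and only if there is a walk between i and j all of whose sections are paths, on which every node of every collider section lies in C ∪ ant(C) and no node of any non-collider section lies in C. Moreover, the two walks can be chosen to be endpoint-identical. -/
/-!
Common definitions: mixed graphs, walks, sections, colliders, c-separation, and the
marginalization / conditioning / anterial-graph algorithms of Sadeghi,
"Marginalization and conditioning for LWF chain graphs".
-/

namespace LWF

variable {V : Type*} {W : Type*}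

/-- A mixed graph: a node set together with three edge relations
(lines `i — j`, arrows `i → j`, arcs `i ↔ j`). -/
structure MixedGraph (V : Type*) where
  nodes : Set V
  line : V → V → Prop
  arrow : V → V → Prop
  arc : V → V → Prop

namespace MixedGraph

/-- The structural axioms of a (loopless) mixed graph: lines and arcs are symmetric,
all three relations are irreflexive, and edges join nodes of the graph. -/
def IsMixedGraph (G : MixedGraph V) : Prop :=
  (∀ i j, G.line i j → G.line j i) ∧ (∀ i, ¬ G.line i i) ∧
  (∀ i, ¬ G.arrow i i) ∧
  (∀ i j, G.arc i j → G.arc j i) ∧ (∀ i, ¬ G.arc i i) ∧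
  (∀ i j, G.line i j → i ∈ G.nodes ∧ j ∈ G.nodes) ∧
  (∀ i j, G.arrow i j → i ∈ G.nodes ∧ j ∈ G.nodes) ∧
  (∀ i j, G.arc i j → i ∈ G.nodes ∧ j ∈ G.nodes)

/-- `i` and `j` are adjacent: some edge joins them. -/
def adj (G : MixedGraph V) (i j : V) : Prop :=
  G.line i j ∨ G.arrow i j ∨ G.arrow j i ∨ G.arc i j

/-- A single step of a semi-directed walk: a line, or an arrow pointing forwards. -/
def sdStep (G : MixedGraph V) (i j : V) : Prop := G.line i j ∨ G.arrow i j

/-- `i` is an anterior of `j`: there is a (nontrivial) semi-directed walk from `i` to `j`;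
by convention a node is not an anterior of itself. -/
def anterior (G : MixedGraph V) (i j : V) : Prop :=
  i ≠ j ∧ Relation.TransGen G.sdStep i j

/-- The set of anteriors of a node. -/
def ant (G : MixedGraph V) (j : V) : Set V := {i | G.anterior i j}

/-- `ant(C) = (⋃ c ∈ C, ant(c)) \ C` -/
def antSet (G : MixedGraph V) (C : Set V) : Set V := (⋃ c ∈ C, G.ant c) \ C

/-- No semi-directed cycle containing at least one arrow: equivalently, there is no
arrow `a → b` together with a semi-directed walk from `b` back to `a`. -/
def NoArrowSemiDirectedCycle (G : MixedGraph V) : Prop :=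
  ∀ a b, G.arrow a b → ¬ Relation.ReflTransGen G.sdStep b a

/-- chain mixed graph -/
def IsCMG (G : MixedGraph V) : Prop := G.IsMixedGraph ∧ G.NoArrowSemiDirectedCycle

/-- chain graph: a CMG without arcs -/
def IsCG (G : MixedGraph V) : Prop := G.IsCMG ∧ ∀ i j, ¬ G.arc i j

/-- anterial graph: a CMG in which no arc has an endpoint that is an anterior of the
other endpoint -/
def IsAnG (G : MixedGraph V) : Prop :=
  G.IsCMG ∧ ∀ i j, G.arc i j → ¬ G.anterior i j

/-- `p` is a path consisting only of lines, from `a` to `b` (possibly a single node). -/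
def lineSection (G : MixedGraph V) (p : List V) (a b : V) : Prop :=
  p ≠ [] ∧ p.Chain' G.line ∧ p.Nodup ∧ p.head? = some a ∧ p.getLast? = some b

end MixedGraph

/-- The kind of a non-line connecting edge on a walk. -/
inductive Conn : Type
  | fwd   -- an arrow pointing forwards along the walk
  | bwd   -- an arrow pointing backwards along the walk
  | biarc -- an arc

/-- The connecting edge has an arrowhead pointing at the following section. -/
def Conn.headTowardsNext : Conn → Prop
  | .fwd => True
  | .bwd => False
  | .biarc => True

/-- The connecting edge has an arrowhead pointing at the preceding section. -/
def Conn.headTowardsPrev : Conn → Prop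
  | .fwd => False
  | .bwd => True
  | .biarc => True

/-- The connecting edge of kind `c` from `a` to `b` is present in `G`. -/
def MixedGraph.connOK (G : MixedGraph V) : Conn → V → V → Prop
  | .fwd, a, b => G.arrow a b
  | .bwd, a, b => G.arrow b a
  | .biarc, a, b => G.arc a b

/-- A walk in a mixed graph, presented by its (unique) decomposition into sections:
a first section followed by a list of non-line connecting edges, each with the next
section. Each section is a nonempty list of nodes joined by lines. -/
structure MWalk (V : Type*) where
  first : List V
  rest : List (Conn × List V)

namespace MWalk

/-- The list of sections of a walk. -/
def sections (w : MWalk V) : List (List V) := w.first :: w.rest.map Prod.snd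

/-- The list of connecting (non-line) edges of a walk. -/
def conns (w : MWalk V) : List Conn := w.rest.map Prod.fst

/-- The list of all nodes of a walk, in order. -/
def nodes (w : MWalk V) : List V := w.sections.flatten

/-- The inner nodes of a walk: all nodes except the two endpoints. -/
def innerNodes (w : MWalk V) : List V := (w.nodes.drop 1).dropLast

/-- The section with index `k` is a collider section of the walk: it is an inner
section and the connecting edges on both sides have an arrowhead pointing at it. -/
def colliderAt (w : MWalk V) (k : ℕ) : Prop :=
  0 < k ∧ k < w.conns.length ∧
  (∃ c, w.conns[k-1]? = some c ∧ c.headTowardsNext) ∧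
  (∃ c, w.conns[k]? = some c ∧ c.headTowardsPrev)

/-- There is an arrowhead pointing at the endpoint section containing the first node. -/
def headAtStart (w : MWalk V) : Prop :=
  ∃ c, w.conns[0]? = some c ∧ c.headTowardsPrev

/-- There is an arrowhead pointing at the endpoint section containing the last node. -/
def headAtEnd (w : MWalk V) : Prop :=
  ∃ c, w.conns[w.conns.length - 1]? = some c ∧ c.headTowardsNext

/-- The walk is `c`-connecting given `C`: every collider section contains a node of `C`
and no non-collider section contains a node of `C`. -/
def cConnecting (w : MWalk V) (C : Set V) : Prop :=
  (∀ k s, w.sections[k]? = some s → w.colliderAt k → ∃ x ∈ s, x ∈ C) ∧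
  (∀ k s, w.sections[k]? = some s → ¬ w.colliderAt k → ∀ x ∈ s, x ∉ C)

end MWalk

/-- Two walks between the same endpoints are endpoint-identical: one has an arrowhead
pointing at its endpoint section containing the first (resp. last) endpoint exactly when
the other does. -/
def EndpointIdentical (w₁ w₂ : MWalk V) : Prop :=
  (w₁.headAtStart ↔ w₂.headAtStart) ∧ (w₁.headAtEnd ↔ w₂.headAtEnd)

/-- Auxiliary: the tail of a walk is realized in `G`, starting at node `a`
and ending at node `j`. -/
def walkAux (G : MixedGraph V) : V → List (Conn × List V) → V → Prop
  | a, [], j => a = j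
  | a, (c, s) :: rest, j =>
      s ≠ [] ∧ s.Chain' G.line ∧
      (∃ b, s.head? = some b ∧ G.connOK c a b) ∧
      (∃ e, s.getLast? = some e ∧ walkAux G e rest j)

/-- `w` is a walk in `G` between `i` and `j` (read from `i` to `j`). -/
def MWalk.IsWalkFrom (w : MWalk V) (G : MixedGraph V) (i j : V) : Prop :=
  w.first ≠ [] ∧ w.first.Chain' G.line ∧ w.first.head? = some i ∧
  ∃ e, w.first.getLast? = some e ∧ walkAux G e w.rest j

namespace MixedGraph

/-- There is a `c`-connecting walk between `i` and `j` given `C` in `G`. -/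
def cConnect (G : MixedGraph V) (i j : V) (C : Set V) : Prop :=
  ∃ w : MWalk V, w.IsWalkFrom G i j ∧ w.cConnecting C

/-- `A ⊥_c B | C` in `G`. -/
def cSep (G : MixedGraph V) (A B C : Set V) : Prop :=
  ∀ i ∈ A, ∀ j ∈ B, ¬ G.cConnect i j C

/-- `edgeB G i j hi hj`: there is an edge between `i` and `j` in `G` with an arrowhead
at `i` iff `hi = true`, and an arrowhead at `j` iff `hj = true`. -/
def edgeB (G : MixedGraph V) (i j : V) : Bool → Bool → Prop
  | false, false => G.line i j
  | false, true => G.arrow i j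
  | true, false => G.arrow j i
  | true, true => G.arc i j

/-- A graph is maximal if every pair of distinct non-adjacent nodes is c-separated by
some node set. -/
def MaximalCMG (G : MixedGraph V) : Prop :=
  ∀ i ∈ G.nodes, ∀ j ∈ G.nodes, i ≠ j → ¬ G.adj i j →
    ∃ C : Set V, C ⊆ G.nodes ∧ i ∉ C ∧ j ∉ C ∧ ¬ G.cConnect i j C

/-- Delete the nodes in `M` together with all edges incident to them. -/
def deleteNodes (G : MixedGraph V) (M : Set V) : MixedGraph V where
  nodes := G.nodes \ M
  line i j := G.line i j ∧ i ∉ M ∧ j ∉ M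
  arrow i j := G.arrow i j ∧ i ∉ M ∧ j ∉ M
  arc i j := G.arc i j ∧ i ∉ M ∧ j ∉ M

/-! ### the marginalization algorithm -/

/-- Case 9 of step 1 of the marginalization algorithm: a collider trislide
`m → i — ⋯ — t ↔ j` with `m ∈ M` generates the arc `i ↔ j`. -/
def margGen9 (G : MixedGraph V) (M : Set V) (i j : V) : Prop :=
  ∃ m ∈ M, ∃ p t, G.arrow m i ∧ G.lineSection p i t ∧ G.arc t j ∧
    j ∉ p ∧ m ∉ p ∧ j ≠ m

/-- Step 1 of the marginalization algorithm: for every collider trislide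
`m → i — ⋯ — t ← j` (resp. `m → i — ⋯ — t ↔ j`) with endpoint `m ∈ M`, add the arrow
`j → i` (resp. the arc `i ↔ j`). -/
def margStep1 (G : MixedGraph V) (M : Set V) : MixedGraph V where
  nodes := G.nodes
  line := G.line
  arrow a b := G.arrow a b ∨
    ∃ m ∈ M, ∃ p t, G.arrow m b ∧ G.lineSection p b t ∧ G.arrow a t ∧
      a ∉ p ∧ m ∉ p ∧ a ≠ m
  arc a b := G.arc a b ∨ G.margGen9 M a b ∨ G.margGen9 M b a

end MixedGraph

/-- The kind of an edge. -/
inductive EKind : Type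
  | ln  -- a line
  | ar  -- an arrow
  | bi  -- an arc

/-- Step 2 of the marginalization algorithm, as a closure: starting from the edges of
`H`, repeatedly add, for every tripath with inner node `m ∈ M`, the edge given in
Table 1 (cases 1-7), until no new edge can be added. `MargCl H M EKind.ar a b` means:
an arrow from `a` to `b`. -/
inductive MargCl (H : MixedGraph V) (M : Set V) : EKind → V → V → Prop
  | base_ln {i j : V} : H.line i j → MargCl H M EKind.ln i j
  | base_ar {i j : V} : H.arrow i j → MargCl H M EKind.ar i j
  | base_bi {i j : V} : H.arc i j → MargCl H M EKind.bi i j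
  | symm_ln {i j : V} : MargCl H M EKind.ln i j → MargCl H M EKind.ln j i
  | symm_bi {i j : V} : MargCl H M EKind.bi i j → MargCl H M EKind.bi j i
  /-- `i ← m ← j` generates the arrow `j → i` -/
  | r1 {i j m : V} : m ∈ M → i ≠ j → MargCl H M EKind.ar j m →
      MargCl H M EKind.ar m i → MargCl H M EKind.ar j i
  /-- `i ← m — j` generates the arrow `j → i` -/
  | r2 {i j m : V} : m ∈ M → i ≠ j → MargCl H M EKind.ln m j →
      MargCl H M EKind.ar m i → MargCl H M EKind.ar j i
  /-- `i ↔ m — j` generates the arc `i ↔ j` -/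
  | r3 {i j m : V} : m ∈ M → i ≠ j → MargCl H M EKind.bi i m →
      MargCl H M EKind.ln m j → MargCl H M EKind.bi i j
  /-- `i ← m → j` generates the arc `i ↔ j` -/
  | r4 {i j m : V} : m ∈ M → i ≠ j → MargCl H M EKind.ar m i →
      MargCl H M EKind.ar m j → MargCl H M EKind.bi i j
  /-- `i ← m ↔ j` generates the arc `i ↔ j` -/
  | r5 {i j m : V} : m ∈ M → i ≠ j → MargCl H M EKind.ar m i →
      MargCl H M EKind.bi m j → MargCl H M EKind.bi i j
  /-- `i — m ← j` generates the arrow `j → i` -/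
  | r6 {i j m : V} : m ∈ M → i ≠ j → MargCl H M EKind.ln i m →
      MargCl H M EKind.ar j m → MargCl H M EKind.ar j i
  /-- `i — m — j` generates the line `i — j` -/
  | r7 {i j m : V} : m ∈ M → i ≠ j → MargCl H M EKind.ln i m →
      MargCl H M EKind.ln m j → MargCl H M EKind.ln i j

namespace MixedGraph

/-- The graph obtained after steps 1 and 2 of the marginalization algorithm. -/
def margCore (G : MixedGraph V) (M : Set V) : MixedGraph V where
  nodes := G.nodes
  line := MargCl (G.margStep1 M) M EKind.ln
  arrow := MargCl (G.margStep1 M) M EKind.ar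
  arc := MargCl (G.margStep1 M) M EKind.bi

/-- The marginalization algorithm `α_CMG(G; M, ∅)`. -/
def alphaMarg (G : MixedGraph V) (M : Set V) : MixedGraph V :=
  (G.margCore M).deleteNodes M

/-! ### the conditioning algorithm -/

/-- Step 2, case 4, of the conditioning algorithm: a collider trislide
`s ↔ b — ⋯ — t ← a` with `s ∈ S` generates the arrow `a → b`. -/
def condGenArrow (G : MixedGraph V) (S : Set V) (a b : V) : Prop :=
  ∃ s ∈ S, ∃ p t, G.arc s b ∧ G.lineSection p b t ∧ G.arrow a t ∧
    a ∉ p ∧ s ∉ p ∧ a ≠ s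

/-- Step 2, case 5, of the conditioning algorithm: a collider trislide
`s ↔ i — ⋯ — t ↔ j` with `s ∈ S` generates the arc `i ↔ j`. -/
def condGenArc (G : MixedGraph V) (S : Set V) (i j : V) : Prop :=
  ∃ s ∈ S, ∃ p t, G.arc s i ∧ G.lineSection p i t ∧ G.arc t j ∧
    j ∉ p ∧ s ∉ p ∧ j ≠ s

/-- The graph obtained after step 2 of the conditioning algorithm. -/
def condStep2 (G : MixedGraph V) (S : Set V) : MixedGraph V where
  nodes := G.nodes
  line := G.line
  arrow a b := G.arrow a b ∨ G.condGenArrow S a b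
  arc a b := G.arc a b ∨ G.condGenArc S a b ∨ G.condGenArc S b a

end MixedGraph

/-- Step 3 of the conditioning algorithm, as a closure: starting from the edges of `H`,
repeatedly add, for every collider trislide whose inner section has all its nodes in
`S`, the indicated edge; lines generated in this step are not used to form new
sections (sections are formed from the lines of `H` only). -/
inductive CondCl (H : MixedGraph V) (S : Set V) : EKind → V → V → Prop
  | base_ln {i j : V} : H.line i j → CondCl H S EKind.ln i j
  | base_ar {i j : V} : H.arrow i j → CondCl H S EKind.ar i j
  | base_bi {i j : V} : H.arc i j → CondCl H S EKind.bi i j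
  | symm_ln {i j : V} : CondCl H S EKind.ln i j → CondCl H S EKind.ln j i
  | symm_bi {i j : V} : CondCl H S EKind.bi i j → CondCl H S EKind.bi j i
  /-- `i → s — ⋯ — s ← j` generates the line `i — j` -/
  | rLL {i j a b : V} {p : List V} :
      H.lineSection p a b → (∀ x ∈ p, x ∈ S) → i ≠ j → i ∉ p → j ∉ p →
      CondCl H S EKind.ar i a → CondCl H S EKind.ar j b → CondCl H S EKind.ln i j
  /-- `i ↔ s — ⋯ — s ← j` generates the arrow `j → i` -/
  | rBL {i j a b : V} {p : List V} :
      H.lineSection p a b → (∀ x ∈ p, x ∈ S) → i ≠ j → i ∉ p → j ∉ p →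
      CondCl H S EKind.bi i a → CondCl H S EKind.ar j b → CondCl H S EKind.ar j i
  /-- `i ↔ s — ⋯ — s ↔ j` generates the arc `i ↔ j` -/
  | rBB {i j a b : V} {p : List V} :
      H.lineSection p a b → (∀ x ∈ p, x ∈ S) → i ≠ j → i ∉ p → j ∉ p →
      CondCl H S EKind.bi i a → CondCl H S EKind.bi j b → CondCl H S EKind.bi i j

namespace MixedGraph

/-- Step 4 of the conditioning algorithm: remove all arrowheads pointing at members of
`S`; arrows pointing at `S` become lines, and arcs with an endpoint in `S` become
arrows pointing away from that endpoint (arcs with both endpoints in `S` become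
lines). -/
def removeHeads (G : MixedGraph V) (S : Set V) : MixedGraph V where
  nodes := G.nodes
  line a b := G.line a b ∨ (G.arrow a b ∧ b ∈ S) ∨ (G.arrow b a ∧ a ∈ S) ∨
    (G.arc a b ∧ a ∈ S ∧ b ∈ S)
  arrow a b := (G.arrow a b ∧ b ∉ S) ∨ (G.arc a b ∧ a ∈ S ∧ b ∉ S)
  arc a b := G.arc a b ∧ a ∉ S ∧ b ∉ S

/-- The graph obtained after steps 1–3 of the conditioning algorithm. -/
def condCore (G : MixedGraph V) (C : Set V) : MixedGraph V where
  nodes := G.nodes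
  line := CondCl (G.condStep2 (C ∪ G.antSet C)) (C ∪ G.antSet C) EKind.ln
  arrow := CondCl (G.condStep2 (C ∪ G.antSet C)) (C ∪ G.antSet C) EKind.ar
  arc := CondCl (G.condStep2 (C ∪ G.antSet C)) (C ∪ G.antSet C) EKind.bi

/-- The conditioning algorithm `α_CMG(G; ∅, C)`. -/
def alphaCond (G : MixedGraph V) (C : Set V) : MixedGraph V :=
  ((G.condCore C).removeHeads (C ∪ G.antSet C)).deleteNodes C

/-- Simultaneous marginalization and conditioning:
`α_CMG(G; M, C) = α_CMG(α_CMG(G; M, ∅); ∅, C)`. -/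
def alphaCMG (G : MixedGraph V) (M C : Set V) : MixedGraph V :=
  (G.alphaMarg M).alphaCond C

/-! ### anterial graphs -/

/-- Step 3 of the anterial-graph algorithm: a trislide `a → t — ⋯ — b ↔ k` with
`k ∈ ant(b)` generates the arrow `a → b`. -/
def angGen3Arrow (H : MixedGraph V) (a b : V) : Prop :=
  ∃ p t k, H.arrow a t ∧ H.lineSection p t b ∧ H.arc b k ∧ H.anterior k b ∧
    a ∉ p ∧ k ∉ p ∧ a ≠ k

/-- Step 3 of the anterial-graph algorithm: a trislide `a ↔ t — ⋯ — b ↔ k` with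
`k ∈ ant(b)` generates the arc `a ↔ b`. -/
def angGen3Arc (H : MixedGraph V) (a b : V) : Prop :=
  ∃ p t k, H.arc a t ∧ H.lineSection p t b ∧ H.arc b k ∧ H.anterior k b ∧
    a ∉ p ∧ k ∉ p ∧ a ≠ k

/-- The graph obtained after step 3 of the anterial-graph algorithm applied to `H`. -/
def angStep3 (H : MixedGraph V) : MixedGraph V where
  nodes := H.nodes
  line := H.line
  arrow a b := H.arrow a b ∨ H.angGen3Arrow a b
  arc a b := H.arc a b ∨ H.angGen3Arc a b ∨ H.angGen3Arc b a

end MixedGraph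

/-- Step 4 of the anterial-graph algorithm, as a closure: repeatedly add, for every
trislide `j → k₁ — ⋯ — k_m ↔ i` (resp. `j ↔ k₁ — ⋯ — k_m ↔ i`) with some `k_r ∈ ant(i)`,
the arrow `j → i` (resp. the arc `j ↔ i`). -/
inductive AnGCl (H : MixedGraph V) : EKind → V → V → Prop
  | base_ln {i j : V} : H.line i j → AnGCl H EKind.ln i j
  | base_ar {i j : V} : H.arrow i j → AnGCl H EKind.ar i j
  | base_bi {i j : V} : H.arc i j → AnGCl H EKind.bi i j
  | symm_bi {i j : V} : AnGCl H EKind.bi i j → AnGCl H EKind.bi j i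
  /-- `j → k₁ — ⋯ — k_m ↔ i` with some `k_r ∈ ant(i)` generates the arrow `j → i` -/
  | r_ar {i j a b : V} {p : List V} :
      H.lineSection p a b → (∃ r ∈ p, H.anterior r i) → j ∉ p → i ∉ p → j ≠ i →
      AnGCl H EKind.ar j a → AnGCl H EKind.bi b i → AnGCl H EKind.ar j i
  /-- `j ↔ k₁ — ⋯ — k_m ↔ i` with some `k_r ∈ ant(i)` generates the arc `j ↔ i` -/
  | r_bi {i j a b : V} {p : List V} :
      H.lineSection p a b → (∃ r ∈ p, H.anterior r i) → j ∉ p → i ∉ p → j ≠ i →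
      AnGCl H EKind.bi j a → AnGCl H EKind.bi b i → AnGCl H EKind.bi j i

namespace MixedGraph

/-- The graph obtained after step 4 of the anterial-graph algorithm applied to `H`. -/
def angStep4Graph (H : MixedGraph V) : MixedGraph V where
  nodes := H.nodes
  line := AnGCl H EKind.ln
  arrow := AnGCl H EKind.ar
  arc := AnGCl H EKind.bi

/-- Step 5 of the anterial-graph algorithm: replace every arc `a ↔ b` with `a ∈ ant(b)`
by the arrow `a → b`, and by the line `a — b` if also `b ∈ ant(a)`. -/
def angStep5 (K : MixedGraph V) : MixedGraph V where
  nodes := K.nodes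
  line a b := K.line a b ∨ (K.arc a b ∧ K.anterior a b ∧ K.anterior b a)
  arrow a b := K.arrow a b ∨ (K.arc a b ∧ K.anterior a b ∧ ¬ K.anterior b a)
  arc a b := K.arc a b ∧ ¬ K.anterior a b ∧ ¬ K.anterior b a

/-- The operation `α_{CMG.AnG}`: steps 3, 4, and 5 of the anterial-graph algorithm. -/
def cmgToAnG (H : MixedGraph V) : MixedGraph V :=
  H.angStep3.angStep4Graph.angStep5

/-- The anterial-graph algorithm `α_AnG(G; M, C) = α_{CMG.AnG}(α_CMG(G; M, C))`. -/
def alphaAnG (G : MixedGraph V) (M C : Set V) : MixedGraph V :=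
  (G.alphaCMG M C).cmgToAnG

/-- A subprimitive inducing walk from `j` to `i` in `G`: a walk from `j` to `i` all of
whose (inner) sections are collider and have all their nodes in `ant(i)`. -/
def SubprimFrom (G : MixedGraph V) (w : MWalk V) (j i : V) : Prop :=
  w.IsWalkFrom G j i ∧
  (∀ k, 0 < k → k < w.conns.length → w.colliderAt k) ∧
  (∀ k s, 0 < k → k < w.conns.length → w.sections[k]? = some s →
    ∀ x ∈ s, G.anterior x i)

end MixedGraph

/-- The image of a mixed graph under a map of node sets. -/
def MixedGraph.gmap (f : V → W) (G : MixedGraph V) : MixedGraph W where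
  nodes := f '' G.nodes
  line a b := ∃ i j, G.line i j ∧ a = f i ∧ b = f j
  arrow a b := ∃ i j, G.arrow i j ∧ a = f i ∧ b = f j
  arc a b := ∃ i j, G.arc i j ∧ a = f i ∧ b = f j

end LWF

namespace LWF

variable {V : Type*}

/-- A walk whose sections are all paths, on which every node of every collider section
lies in `C ∪ ant(C)` and no node of any non-collider section lies in `C`. -/
def GoodWalk (G : MixedGraph V) (C : Set V) (w : MWalk V) : Prop :=
  (∀ (k : ℕ) (s : List V), w.sections[k]? = some s → s.Nodup) ∧
  (∀ k s, w.sections[k]? = some s → w.colliderAt k → ∀ x ∈ s, x ∈ C ∪ G.antSet C) ∧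
  (∀ k s, w.sections[k]? = some s → ¬ w.colliderAt k → ∀ x ∈ s, x ∉ C)

/-! ### Auxiliary local characterizations of `cConnecting` and `GoodWalk` -/

open MixedGraph in
/-- the pair (incoming connector, optional outgoing connector) makes a collider -/
def collPair (c : Conn) (o : Option Conn) : Prop :=
  c.headTowardsNext ∧ ∃ c', o = some c' ∧ c'.headTowardsPrev

/-- the connector before the first section of `r`, defaulting to `nx` -/
def headConn (r : List (Conn × List V)) (nx : Option Conn) : Option Conn :=
  match r with
  | [] => nx
  | (c, _) :: _ => some c

def secOK (C : Set V) (c : Conn) (o : Option Conn) (s : List V) : Prop :=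
  (collPair c o → ∃ x ∈ s, x ∈ C) ∧ (¬ collPair c o → ∀ x ∈ s, x ∉ C)

def gsecOK (G : MixedGraph V) (C : Set V) (c : Conn) (o : Option Conn) (s : List V) : Prop :=
  s.Nodup ∧ (collPair c o → ∀ x ∈ s, x ∈ C ∪ G.antSet C) ∧
    (¬ collPair c o → ∀ x ∈ s, x ∉ C)

def CCA (C : Set V) : List (Conn × List V) → Option Conn → Prop
  | [], _ => True
  | (c, s) :: r, nx => secOK C c (headConn r nx) s ∧ CCA C r nx

def GA (G : MixedGraph V) (C : Set V) : List (Conn × List V) → Option Conn → Prop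
  | [], _ => True
  | (c, s) :: r, nx => gsecOK G C c (headConn r nx) s ∧ GA G C r nx

@[simp] lemma collPair_none (c : Conn) : ¬ collPair c none := by
  rintro ⟨-, c', h, -⟩; simp at h

lemma collPair_some (c c' : Conn) :
    collPair c (some c') ↔ (c.headTowardsNext ∧ c'.headTowardsPrev) := by
  constructor
  · rintro ⟨h1, c'', h2, h3⟩; cases h2; exact ⟨h1, h3⟩
  · rintro ⟨h1, h2⟩; exact ⟨h1, c', rfl, h2⟩

/-- the lookahead connector at position `k` of `r` -/
def lookC (r : List (Conn × List V)) (nx : Option Conn) (k : ℕ) : Option Conn :=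
  match r[k+1]? with
  | some p => some p.1
  | none => nx

lemma headConn_eq_look (r : List (Conn × List V)) (nx : Option Conn) :
    headConn r nx = (match r[0]? with | some p => some p.1 | none => nx) := by
  cases r <;> simp [headConn]

lemma lookC_cons_zero (p : Conn × List V) (t : List (Conn × List V)) (nx : Option Conn) :
    lookC (p :: t) nx 0 = headConn t nx := by
  unfold lookC
  rw [List.getElem?_cons_succ, headConn_eq_look]

lemma lookC_cons_succ (p : Conn × List V) (t : List (Conn × List V)) (nx : Option Conn)
    (k : ℕ) : lookC (p :: t) nx (k+1) = lookC t nx k := by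
  unfold lookC
  rw [List.getElem?_cons_succ]

lemma headConn_congr {r r' : List (Conn × List V)} (nx : Option Conn)
    (h : r'.head?.map Prod.fst = r.head?.map Prod.fst) :
    headConn r' nx = headConn r nx := by
  cases r' with
  | nil => cases r with
    | nil => rfl
    | cons p t => simp at h
  | cons p' t' => cases r with
    | nil => simp at h
    | cons p t => simp only [List.head?_cons, Option.map_some] at h
                  simpa [headConn] using h

lemma CCA_iff_forall (C : Set V) :
    ∀ (r : List (Conn × List V)) (nx : Option Conn),
      CCA C r nx ↔ ∀ k p, r[k]? = some p → secOK C p.1 (lookC r nx k) p.2 := by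
  intro r
  induction r with
  | nil => intro nx; simp [CCA]
  | cons p t ih =>
    intro nx
    obtain ⟨c, s⟩ := p
    constructor
    · rintro ⟨h1, h2⟩ k q hq
      cases k with
      | zero =>
        simp only [List.getElem?_cons_zero, Option.some_inj] at hq
        cases hq
        rw [lookC_cons_zero]; exact h1
      | succ k =>
        simp only [List.getElem?_cons_succ] at hq
        rw [lookC_cons_succ]; exact (ih nx).1 h2 k q hq
    · intro h
      refine ⟨?_, (ih nx).2 fun k q hq => ?_⟩
      · have := h 0 (c, s) (by simp)
        rwa [lookC_cons_zero] at this
      · have := h (k+1) q (by simpa using hq)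
        rwa [lookC_cons_succ] at this

lemma GA_iff_forall (G : MixedGraph V) (C : Set V) :
    ∀ (r : List (Conn × List V)) (nx : Option Conn),
      GA G C r nx ↔ ∀ k p, r[k]? = some p → gsecOK G C p.1 (lookC r nx k) p.2 := by
  intro r
  induction r with
  | nil => intro nx; simp [GA]
  | cons p t ih =>
    intro nx
    obtain ⟨c, s⟩ := p
    constructor
    · rintro ⟨h1, h2⟩ k q hq
      cases k with
      | zero =>
        simp only [List.getElem?_cons_zero, Option.some_inj] at hq
        cases hq
        rw [lookC_cons_zero]; exact h1
      | succ k =>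
        simp only [List.getElem?_cons_succ] at hq
        rw [lookC_cons_succ]; exact (ih nx).1 h2 k q hq
    · intro h
      refine ⟨?_, (ih nx).2 fun k q hq => ?_⟩
      · have := h 0 (c, s) (by simp)
        rwa [lookC_cons_zero] at this
      · have := h (k+1) q (by simpa using hq)
        rwa [lookC_cons_succ] at this

lemma sections_zero (w : MWalk V) : w.sections[0]? = some w.first := by
  simp [MWalk.sections]

lemma sections_succ (w : MWalk V) (k : ℕ) :
    w.sections[k+1]? = (w.rest[k]?).map Prod.snd := by
  simp [MWalk.sections, List.getElem?_map]

lemma conns_get (w : MWalk V) (k : ℕ) :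
    w.conns[k]? = (w.rest[k]?).map Prod.fst := by
  simp [MWalk.conns, List.getElem?_map]

lemma not_colliderAt_zero (w : MWalk V) : ¬ w.colliderAt 0 := by
  rintro ⟨h, -⟩; exact absurd h (by simp)

lemma colliderAt_succ_iff (w : MWalk V) (k : ℕ) {c : Conn} {s : List V}
    (h : w.rest[k]? = some (c, s)) :
    w.colliderAt (k+1) ↔ collPair c (lookC w.rest none k) := by
  unfold MWalk.colliderAt
  have hconn : w.conns[k]? = some c := by rw [conns_get, h]; rfl
  have hlen : w.conns.length = w.rest.length := by simp [MWalk.conns]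
  constructor
  · rintro ⟨-, hlt, ⟨c₁, hc₁, hn⟩, ⟨c₂, hc₂, hp⟩⟩
    simp only [Nat.add_sub_cancel] at hc₁
    rw [hconn] at hc₁
    cases hc₁
    refine ⟨hn, c₂, ?_, hp⟩
    rw [conns_get] at hc₂
    unfold lookC
    obtain ⟨q, hq⟩ : ∃ q, w.rest[k+1]? = some q := by
      cases hh : w.rest[k+1]? with
      | none => rw [hh] at hc₂; simp at hc₂
      | some q => exact ⟨q, rfl⟩
    rw [hq]
    rw [hq] at hc₂
    simp only [Option.map_some] at hc₂
    simp [hc₂]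
  · rintro ⟨hn, c₂, hc₂, hp⟩
    unfold lookC at hc₂
    obtain ⟨q, hq⟩ : ∃ q, w.rest[k+1]? = some q := by
      cases hh : w.rest[k+1]? with
      | none => rw [hh] at hc₂; simp at hc₂
      | some q => exact ⟨q, rfl⟩
    rw [hq] at hc₂
    simp only [Option.some_inj] at hc₂
    have hlt : k + 1 < w.rest.length := (List.getElem?_eq_some_iff.1 hq).1
    refine ⟨Nat.succ_pos k, by rw [hlen]; exact hlt, ⟨c, by simpa using hconn, hn⟩,
      ⟨c₂, ?_, hp⟩⟩
    rw [conns_get, hq, ← hc₂]; rfl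

lemma cConnecting_iff (w : MWalk V) (C : Set V) :
    w.cConnecting C ↔ ((∀ x ∈ w.first, x ∉ C) ∧ CCA C w.rest none) := by
  constructor
  · rintro ⟨hcol, hncol⟩
    refine ⟨hncol 0 w.first (sections_zero w) (not_colliderAt_zero w), ?_⟩
    rw [CCA_iff_forall]
    rintro k ⟨c, s⟩ hk
    have hsec : w.sections[k+1]? = some s := by rw [sections_succ, hk]; rfl
    constructor
    · intro hcp
      exact hcol (k+1) s hsec ((colliderAt_succ_iff w k hk).2 hcp)
    · intro hcp
      exact hncol (k+1) s hsec (fun hco => hcp ((colliderAt_succ_iff w k hk).1 hco))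
  · rintro ⟨h0, hcca⟩
    rw [CCA_iff_forall] at hcca
    constructor
    · intro k s hs hco
      cases k with
      | zero => exact absurd hco (not_colliderAt_zero w)
      | succ k =>
        rw [sections_succ] at hs
        obtain ⟨⟨c, s'⟩, hq, hq2⟩ : ∃ p, w.rest[k]? = some p ∧ p.2 = s := by
          cases hh : w.rest[k]? with
          | none => rw [hh] at hs; simp at hs
          | some q => rw [hh] at hs; exact ⟨q, rfl, by simpa using hs⟩
        cases hq2
        exact (hcca k (c, s') hq).1 ((colliderAt_succ_iff w k hq).1 hco)
    · intro k s hs hco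
      cases k with
      | zero =>
        have : s = w.first := by 
          rw [sections_zero] at hs; simpa using hs.symm
        cases this; exact h0
      | succ k =>
        rw [sections_succ] at hs
        obtain ⟨⟨c, s'⟩, hq, hq2⟩ : ∃ p, w.rest[k]? = some p ∧ p.2 = s := by
          cases hh : w.rest[k]? with
          | none => rw [hh] at hs; simp at hs
          | some q => rw [hh] at hs; exact ⟨q, rfl, by simpa using hs⟩
        cases hq2
        exact (hcca k (c, s') hq).2 (fun hcp => hco ((colliderAt_succ_iff w k hq).2 hcp))

lemma goodWalk_iff (G : MixedGraph V) (w : MWalk V) (C : Set V) :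
    GoodWalk G C w ↔
      (w.first.Nodup ∧ (∀ x ∈ w.first, x ∉ C) ∧ GA G C w.rest none) := by
  constructor
  · rintro ⟨hnd, hcol, hncol⟩
    refine ⟨hnd 0 w.first (sections_zero w), hncol 0 w.first (sections_zero w) (not_colliderAt_zero w), ?_⟩
    rw [GA_iff_forall]
    rintro k ⟨c, s⟩ hk
    have hsec : w.sections[k+1]? = some s := by rw [sections_succ, hk]; rfl
    refine ⟨hnd (k+1) s hsec, ?_, ?_⟩
    · intro hcp
      exact hcol (k+1) s hsec ((colliderAt_succ_iff w k hk).2 hcp)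
    · intro hcp
      exact hncol (k+1) s hsec (fun hco => hcp ((colliderAt_succ_iff w k hk).1 hco))
  · rintro ⟨hnd0, h0, hga⟩
    rw [GA_iff_forall] at hga
    have hget : ∀ k s, w.sections[k+1]? = some s →
        ∃ c s', w.rest[k]? = some (c, s') ∧ s' = s := by
      intro k s hs
      rw [sections_succ] at hs
      cases hh : w.rest[k]? with
      | none => rw [hh] at hs; simp at hs
      | some q => rw [hh] at hs; exact ⟨q.1, q.2, rfl, by simpa using hs⟩
    refine ⟨?_, ?_, ?_⟩
    · intro k s hs
      cases k with
      | zero =>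
        have : s = w.first := by rw [sections_zero] at hs; simpa using hs.symm
        cases this; exact hnd0
      | succ k =>
        obtain ⟨c, s', hq, rfl⟩ := hget k s hs
        exact (hga k (c, s') hq).1
    · intro k s hs hco
      cases k with
      | zero => exact absurd hco (not_colliderAt_zero w)
      | succ k =>
        obtain ⟨c, s', hq, rfl⟩ := hget k s hs
        exact (hga k (c, s') hq).2.1 ((colliderAt_succ_iff w k hq).1 hco)
    · intro k s hs hco
      cases k with
      | zero =>
        have : s = w.first := by rw [sections_zero] at hs; simpa using hs.symm
        cases this; exact h0
      | succ k =>
        obtain ⟨c, s', hq, rfl⟩ := hget k s hs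
        exact (hga k (c, s') hq).2.2
          (fun hcp => hco ((colliderAt_succ_iff w k hq).2 hcp))

/-! ### generic list lemmas -/

lemma exists_dup_decomp {α : Type*} : ∀ (s : List α), ¬ s.Nodup →
    ∃ (u : List α) (a : α) (v w : List α), s = u ++ a :: v ++ a :: w := by
  intro s
  induction s with
  | nil => intro h; exact absurd List.nodup_nil h
  | cons x t ih =>
    intro h
    by_cases hx : x ∈ t
    · obtain ⟨v, w, rfl⟩ := List.append_of_mem hx
      exact ⟨[], x, v, w, rfl⟩
    · have ht : ¬ t.Nodup := fun hnd => h (List.nodup_cons.2 ⟨hx, hnd⟩)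
      obtain ⟨u, a, v, w, rfl⟩ := ih ht
      exact ⟨x :: u, a, v, w, rfl⟩

lemma head?_mid {α : Type*} (u : List α) (a : α) (X Y : List α) :
    (u ++ a :: X).head? = (u ++ a :: Y).head? := by cases u <;> simp

lemma getLast?_cons_of_ne_nil {α : Type*} (q : α) {l : List α} (h : l ≠ []) :
    (q :: l).getLast? = l.getLast? := by
  rw [show q :: l = [q] ++ l from rfl, List.getLast?_append_of_ne_nil _ h]

/-- every section of a walk can be shortened to a path with the same endpoints -/
lemma dedup_aux {R : V → V → Prop} :
    ∀ (n : ℕ) (s : List V), s.length ≤ n → s.Chain' R →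
    ∃ t : List V, t.Chain' R ∧ t.Nodup ∧ t.head? = s.head? ∧
      t.getLast? = s.getLast? ∧ ∀ x ∈ t, x ∈ s := by
  intro n
  induction n with
  | zero =>
    intro s hl hc
    have hs : s = [] := List.length_eq_zero_iff.1 (Nat.le_zero.1 hl)
    subst hs
    exact ⟨[], List.isChain_nil, List.nodup_nil, rfl, rfl, by simp⟩
  | succ n ihn =>
    intro s hl hc
    by_cases hn : s.Nodup
    · exact ⟨s, hc, hn, rfl, rfl, fun x h => h⟩
    · obtain ⟨u, a, v, w, hs⟩ := exists_dup_decomp s hn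
      have hch' : (u ++ a :: w).Chain' R := by
        have h1 : (u ++ [a]).Chain' R := hc.infix ⟨[], (v ++ a :: w), by simp [hs]⟩
        have h2 : (a :: w).Chain' R := hc.infix ⟨u ++ a :: v, [], by simp [hs]⟩
        show List.IsChain R (u ++ a :: w)
        rw [List.isChain_append]
        refine ⟨(List.isChain_append.1 h1).1, h2, ?_⟩
        intro x hx y hy
        simp only [List.head?_cons, Option.mem_def, Option.some_inj] at hy
        subst hy
        exact (List.isChain_append.1 h1).2.2 x hx a (by simp)
      have hlen : (u ++ a :: w).length ≤ n := by
        have : s.length = u.length + v.length + w.length + 2 := by simp [hs]; omega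
        simp only [List.length_append, List.length_cons]
        omega
      obtain ⟨t, ht1, ht2, ht3, ht4, ht5⟩ := ihn (u ++ a :: w) hlen hch'
      refine ⟨t, ht1, ht2, ?_, ?_, ?_⟩
      · rw [ht3, hs]; cases u <;> simp
      · rw [ht4, hs]
        have e1 : (u ++ a :: w).getLast? = (a :: w).getLast? :=
          List.getLast?_append_of_ne_nil _ (List.cons_ne_nil a w)
        have e2 : (u ++ a :: v ++ a :: w).getLast? = (a :: w).getLast? := by
          have he : u ++ a :: v ++ a :: w = (u ++ a :: v) ++ a :: w := by simp
          rw [he]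
          exact List.getLast?_append_of_ne_nil _ (List.cons_ne_nil a w)
        rw [e1, e2]
      · intro x hx
        have := ht5 x hx
        rw [hs]
        simp only [List.mem_append, List.mem_cons] at this ⊢
        tauto

lemma dedup_section {R : V → V → Prop} (s : List V) (hc : s.Chain' R) :
    ∃ t : List V, t.Chain' R ∧ t.Nodup ∧ t.head? = s.head? ∧
      t.getLast? = s.getLast? ∧ ∀ x ∈ t, x ∈ s :=
  dedup_aux s.length s le_rfl hc

/-! ### connectivity within a section -/

lemma chain'_head_rtg (G : MixedGraph V) :
    ∀ (s : List V), s.Chain' G.line → ∀ a, s.head? = some a →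
      ∀ x ∈ s, Relation.ReflTransGen G.sdStep a x := by
  intro s
  induction s with
  | nil => intro _ a ha; simp at ha
  | cons b t ih =>
    intro hc a ha x hx
    simp only [List.head?_cons, Option.some_inj] at ha
    subst ha
    rcases List.mem_cons.1 hx with rfl | hxt
    · exact Relation.ReflTransGen.refl
    · cases t with
      | nil => simp at hxt
      | cons d t' =>
        have hbd : G.line b d := (List.isChain_cons_cons.1 hc).1
        have := ih (List.isChain_cons_cons.1 hc).2 d rfl x hxt
        exact Relation.ReflTransGen.head (Or.inl hbd) this

lemma chain'_rtg_head (G : MixedGraph V) (hsym : ∀ i j, G.line i j → G.line j i) :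
    ∀ (s : List V), s.Chain' G.line → ∀ a, s.head? = some a →
      ∀ x ∈ s, Relation.ReflTransGen G.sdStep x a := by
  intro s
  induction s with
  | nil => intro _ a ha; simp at ha
  | cons b t ih =>
    intro hc a ha x hx
    simp only [List.head?_cons, Option.some_inj] at ha
    subst ha
    rcases List.mem_cons.1 hx with rfl | hxt
    · exact Relation.ReflTransGen.refl
    · cases t with
      | nil => simp at hxt
      | cons d t' =>
        have hbd : G.line b d := (List.isChain_cons_cons.1 hc).1
        have := ih (List.isChain_cons_cons.1 hc).2 d rfl x hxt
        exact this.tail (Or.inl (hsym b d hbd))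

lemma chain'_connected (G : MixedGraph V) (hsym : ∀ i j, G.line i j → G.line j i)
    (s : List V) (hc : s.Chain' G.line) {x y : V} (hx : x ∈ s) (hy : y ∈ s) :
    Relation.ReflTransGen G.sdStep x y := by
  cases s with
  | nil => simp at hx
  | cons b t =>
    exact (chain'_rtg_head G hsym _ hc b rfl x hx).trans
      (chain'_head_rtg G _ hc b rfl y hy)

/-! ### walkAux append, CCA append -/

lemma walkAux_append (G : MixedGraph V) :
    ∀ (l₁ l₂ : List (Conn × List V)) (a j : V),
      walkAux G a (l₁ ++ l₂) j ↔ ∃ b, walkAux G a l₁ b ∧ walkAux G b l₂ j := by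
  intro l₁
  induction l₁ with
  | nil => intro l₂ a j; simp [walkAux]
  | cons p t ih =>
    intro l₂ a j
    obtain ⟨c, s⟩ := p
    simp only [List.cons_append, walkAux]
    constructor
    · rintro ⟨h1, h2, h3, e, he, hw⟩
      obtain ⟨b, hb1, hb2⟩ := (ih l₂ e j).1 hw
      exact ⟨b, ⟨h1, h2, h3, e, he, hb1⟩, hb2⟩
    · rintro ⟨b, ⟨h1, h2, h3, e, he, hw⟩, hb2⟩
      exact ⟨h1, h2, h3, e, he, (ih l₂ e j).2 ⟨b, hw, hb2⟩⟩

lemma headConn_append (r₁ r₂ : List (Conn × List V)) (nx : Option Conn) :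
    headConn (r₁ ++ r₂) nx = headConn r₁ (headConn r₂ nx) := by
  cases r₁ with
  | nil => rfl
  | cons p t => obtain ⟨c, s⟩ := p; rfl

lemma CCA_append (C : Set V) :
    ∀ (r₁ r₂ : List (Conn × List V)) (nx : Option Conn),
      CCA C (r₁ ++ r₂) nx ↔ CCA C r₁ (headConn r₂ nx) ∧ CCA C r₂ nx := by
  intro r₁
  induction r₁ with
  | nil => intro r₂ nx; simp [CCA]
  | cons p t ih =>
    intro r₂ nx
    obtain ⟨c, s⟩ := p
    simp only [List.cons_append, CCA, List.append_eq]
    rw [headConn_append, ih]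
    tauto

/-! ### truncated semi-directed walks and detour blocks -/

lemma trunc (G : MixedGraph V) (C : Set V) {x c : V}
    (h : Relation.ReflTransGen G.sdStep x c) (hc : c ∈ C) :
    ∃ (l : List V) (z : V), List.Chain G.sdStep x l ∧ (x :: l).getLast? = some z ∧
      z ∈ C ∧ ∀ y ∈ (x :: l).dropLast, y ∉ C := by
  induction h using Relation.ReflTransGen.head_induction_on with
  | refl => exact ⟨[], c, List.Chain.nil, by simp, hc, by simp⟩
  | head hstep hrtg ih =>
    rename_i a b
    obtain ⟨l, z, hch, hlast, hz, hdrop⟩ := ih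
    by_cases ha : a ∈ C
    · exact ⟨[], a, List.Chain.nil, by simp, ha, by simp⟩
    · refine ⟨b :: l, z, List.Chain.cons hstep hch, ?_, hz, ?_⟩
      · rw [List.getLast?_cons_cons]; exact hlast
      · intro y hy
        have hd : (a :: b :: l).dropLast = a :: (b :: l).dropLast := by simp
        rw [hd] at hy
        rcases List.mem_cons.1 hy with rfl | hy'
        · exact ha
        · exact hdrop y hy'

/-- the detour block: go down a semi-directed walk to `C` and come back -/
lemma block (G : MixedGraph V) (hsym : ∀ i j, G.line i j → G.line j i) (C : Set V) :
    ∀ (l : List V) (x : V) (ts : List V),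
      List.Chain G.sdStep x l →
      (∀ z, (x :: l).getLast? = some z → z ∈ C) →
      (∀ y ∈ (x :: l).dropLast, y ∉ C) →
      (x :: ts).Chain' G.line →
      (∀ y ∈ ts, y ∉ C) →
      ∃ (F : List V) (M : List (Conn × List V)),
        F ≠ [] ∧ F.Chain' G.line ∧ F.head? = some x ∧
        (∃ e zz, F.getLast? = some e ∧ (x :: ts).getLast? = some zz ∧
          walkAux G e M zz) ∧
        (M = [] → ∃ y ∈ F, y ∈ C) ∧
        (M ≠ [] → ∀ y ∈ F, y ∉ C) ∧
        (∀ p, M.head? = some p → p.1 = Conn.fwd) ∧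
        (∀ nx, CCA C M nx) := by
  intro l
  induction l with
  | nil =>
    intro x ts hchain hz hdrop hlch htsC
    obtain ⟨zz, hzz⟩ : ∃ zz, (x :: ts).getLast? = some zz := by
      cases h : (x :: ts).getLast? with
      | none => exact absurd (List.getLast?_eq_none_iff.1 h) (List.cons_ne_nil _ _)
      | some z2 => exact ⟨z2, rfl⟩
    refine ⟨x :: ts, [], List.cons_ne_nil _ _, hlch, rfl,
      ⟨zz, zz, hzz, hzz, rfl⟩, ?_, by simp, by simp, fun nx => trivial⟩
    intro _
    exact ⟨x, List.mem_cons_self, hz x (by simp)⟩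
  | cons y l' ih =>
    intro x ts hchain hz hdrop hlch htsC
    have hstep : G.sdStep x y := (List.chain_cons.1 hchain).1
    have hchain' : List.Chain G.sdStep y l' := (List.chain_cons.1 hchain).2
    have hz' : ∀ z, (y :: l').getLast? = some z → z ∈ C := by
      intro z h; exact hz z (by rw [List.getLast?_cons_cons]; exact h)
    have hdl : (x :: y :: l').dropLast = x :: (y :: l').dropLast := by simp
    have hxC : x ∉ C := hdrop x (by rw [hdl]; exact List.mem_cons_self)
    have hdrop' : ∀ u ∈ (y :: l').dropLast, u ∉ C := by
      intro u h
      exact hdrop u (by rw [hdl]; exact List.mem_cons_of_mem x h)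
    by_cases hline : G.line x y
    · obtain ⟨F', M, hF0, hFch, hFhd, ⟨e, zz, he, hzz, hwa⟩, s1, s2, s4, s3⟩ :=
        ih y (x :: ts) hchain' hz' hdrop'
          (List.isChain_cons_cons.2 ⟨hsym x y hline, hlch⟩)
          (by
            intro u hu
            rcases List.mem_cons.1 hu with rfl | hu'
            · exact hxC
            · exact htsC u hu')
      refine ⟨x :: F', M, List.cons_ne_nil _ _, ?_, rfl, ?_, ?_, ?_, s4, s3⟩
      · refine List.isChain_cons.2 ⟨?_, hFch⟩
        intro h hh
        rw [hFhd] at hh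
        simp only [Option.mem_def, Option.some_inj] at hh
        subst hh
        exact hline
      · refine ⟨e, zz, ?_, ?_, hwa⟩
        · rw [getLast?_cons_of_ne_nil x hF0]; exact he
        · rw [List.getLast?_cons_cons] at hzz; exact hzz
      · intro hM
        obtain ⟨u, hu, huC⟩ := s1 hM
        exact ⟨u, List.mem_cons_of_mem x hu, huC⟩
      · intro hM u hu
        rcases List.mem_cons.1 hu with rfl | hu'
        · exact hxC
        · exact s2 hM u hu'
    · have harrow : G.arrow x y := hstep.resolve_left hline
      obtain ⟨F', M', hF0, hFch, hFhd, ⟨e, zz, he, hzz, hwa⟩, s1, s2, s4, s3⟩ :=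
        ih y [] hchain' hz' hdrop' (List.isChain_singleton y) (by simp)
      have hzzy : zz = y := by simpa using hzz.symm
      rw [hzzy] at hwa
      obtain ⟨zz2, hzz2⟩ : ∃ z2, (x :: ts).getLast? = some z2 := by
        cases h : (x :: ts).getLast? with
        | none => exact absurd (List.getLast?_eq_none_iff.1 h) (List.cons_ne_nil _ _)
        | some z2 => exact ⟨z2, rfl⟩
      refine ⟨[x], (Conn.fwd, F') :: (M' ++ [(Conn.bwd, x :: ts)]),
        List.cons_ne_nil _ _, List.isChain_singleton x, rfl, ?_, by simp, ?_, ?_, ?_⟩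
      · refine ⟨x, zz2, rfl, hzz2, ?_⟩
        refine ⟨hF0, hFch, ⟨y, hFhd, harrow⟩, e, he, ?_⟩
        refine (walkAux_append G M' [(Conn.bwd, x :: ts)] e zz2).2 ⟨y, hwa, ?_⟩
        refine ⟨List.cons_ne_nil _ _, hlch, ⟨x, rfl, harrow⟩, zz2, hzz2, rfl⟩
      · intro _ u hu
        simp only [List.mem_singleton] at hu
        subst hu
        exact hxC
      · intro p hp
        simp only [List.head?_cons, Option.some_inj] at hp
        subst hp
        rfl
      · intro nx
        refine ⟨?_, (CCA_append C M' [(Conn.bwd, x :: ts)] nx).2 ⟨s3 _, ?_⟩⟩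
        · cases M' with
          | nil =>
            refine ⟨fun _ => s1 rfl, fun h => absurd ?_ h⟩
            exact (collPair_some _ _).2 ⟨trivial, trivial⟩
          | cons q M₂ =>
            have hq : q.1 = Conn.fwd := s4 q rfl
            have hh : headConn ((q :: M₂) ++ [(Conn.bwd, x :: ts)]) nx = some q.1 := by
              obtain ⟨q1, q2⟩ := q; rfl
            rw [hh, hq]
            refine ⟨fun h => ?_, fun _ => s2 (List.cons_ne_nil _ _)⟩
            exfalso
            obtain ⟨-, c', hc', hp⟩ := h
            simp only [Option.some_inj] at hc'
            subst hc'
            exact hp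
        · refine ⟨⟨fun h => ?_, fun _ u hu => ?_⟩, trivial⟩
          · exfalso; obtain ⟨hn, -⟩ := h; exact hn
          · rcases List.mem_cons.1 hu with rfl | hu'
            · exact hxC
            · exact htsC u hu'

/-! ### endpoint identity -/

lemma headAtStart_iff (w : MWalk V) :
    w.headAtStart ↔ ∃ c, w.rest.head?.map Prod.fst = some c ∧ c.headTowardsPrev := by
  unfold MWalk.headAtStart
  rw [conns_get, List.head?_eq_getElem?]

lemma headAtEnd_iff (w : MWalk V) :
    w.headAtEnd ↔ ∃ c, w.rest.getLast?.map Prod.fst = some c ∧ c.headTowardsNext := by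
  unfold MWalk.headAtEnd
  have h1 : w.conns.length - 1 = w.rest.length - 1 := by simp [MWalk.conns]
  rw [h1, show w.conns = w.rest.map Prod.fst from rfl, ← List.length_map (as := w.rest) Prod.fst,
    ← List.getLast?_eq_getElem?, List.getLast?_map]

lemma endpointIdentical_of {w w' : MWalk V}
    (h1 : w'.rest.head?.map Prod.fst = w.rest.head?.map Prod.fst)
    (h2 : w'.rest.getLast?.map Prod.fst = w.rest.getLast?.map Prod.fst) :
    EndpointIdentical w w' := by
  constructor
  · rw [headAtStart_iff, headAtStart_iff, h1]
  · rw [headAtEnd_iff, headAtEnd_iff, h2]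

/-! ### the two transformations -/

lemma dedupRest (G : MixedGraph V) (hsym : ∀ i j, G.line i j → G.line j i) (C : Set V)
    (j : V) :
    ∀ (rest : List (Conn × List V)) (e : V),
      walkAux G e rest j → CCA C rest none →
      ∃ rest', walkAux G e rest' j ∧ GA G C rest' none ∧
        rest'.map Prod.fst = rest.map Prod.fst := by
  intro rest
  induction rest with
  | nil => intro e h _; exact ⟨[], h, trivial, rfl⟩
  | cons p t ih =>
    intro e hwa hcca
    obtain ⟨c, s⟩ := p
    obtain ⟨hs0, hsch, ⟨b, hb, hconn⟩, e₂, hlast, hwt⟩ := hwa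
    obtain ⟨hsec, hccat⟩ := hcca
    obtain ⟨t', hwt', hga', hmap⟩ := ih e₂ hwt hccat
    obtain ⟨s', hs'ch, hs'nd, hs'hd, hs'lst, hs'sub⟩ := dedup_section s hsch
    have hhc : headConn t' none = headConn t none :=
      headConn_congr none (by rw [← List.head?_map, ← List.head?_map, hmap])
    have hs'0 : s' ≠ [] := by
      intro h
      rw [h, hb] at hs'hd
      simp at hs'hd
    refine ⟨(c, s') :: t', ?_, ?_, ?_⟩
    · exact ⟨hs'0, hs'ch, ⟨b, by rw [hs'hd]; exact hb, hconn⟩, e₂,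
        by rw [hs'lst]; exact hlast, hwt'⟩
    · refine ⟨?_, hga'⟩
      rw [show headConn t' none = headConn t none from hhc]
      refine ⟨hs'nd, ?_, ?_⟩
      · intro hcp u hu
        have hus : u ∈ s := hs'sub u hu
        obtain ⟨x₀, hx₀s, hx₀C⟩ := hsec.1 hcp
        by_cases huC : u ∈ C
        · exact Or.inl huC
        · have hrtg : Relation.ReflTransGen G.sdStep u x₀ :=
            chain'_connected G hsym s hsch hus hx₀s
          rcases Relation.reflTransGen_iff_eq_or_transGen.1 hrtg with heq | htg
          · exact absurd (heq ▸ hx₀C) huC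
          · refine Or.inr ⟨?_, huC⟩
            refine Set.mem_biUnion hx₀C ?_
            exact ⟨fun h => huC (h ▸ hx₀C), htg⟩
      · intro hcp u hu
        exact hsec.2 hcp u (hs'sub u hu)
    · simp [hmap]

lemma assemble (G : MixedGraph V) (hsym : ∀ i j, G.line i j → G.line j i) (C : Set V)
    (j : V) :
    ∀ (rest : List (Conn × List V)) (e : V),
      walkAux G e rest j → GA G C rest none →
      ∃ rest', walkAux G e rest' j ∧ CCA C rest' none ∧
        (rest' = [] ↔ rest = []) ∧
        rest'.head?.map Prod.fst = rest.head?.map Prod.fst ∧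
        rest'.getLast?.map Prod.fst = rest.getLast?.map Prod.fst := by
  intro rest
  induction rest with
  | nil => intro e h _; exact ⟨[], h, trivial, Iff.rfl, rfl, rfl⟩
  | cons p t ih =>
    intro e hwa hga
    obtain ⟨c, s⟩ := p
    obtain ⟨hs0, hsch, ⟨b, hb, hconn⟩, e₂, hlast, hwt⟩ := hwa
    obtain ⟨⟨hnd, hcolS, hncolS⟩, hgat⟩ := hga
    obtain ⟨t', hwt', hcca', hnil, hhd, hlst⟩ := ih e₂ hwt hgat
    have hhc : headConn t' none = headConn t none := headConn_congr none hhd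
    by_cases hcp : collPair c (headConn t none)
    · have ht0 : t ≠ [] := by
        intro h
        subst h
        exact collPair_none c hcp
      have ht'0 : t' ≠ [] := fun h => ht0 (hnil.1 h)
      by_cases hex : ∃ u ∈ s, u ∈ C
      · refine ⟨(c, s) :: t', ⟨hs0, hsch, ⟨b, hb, hconn⟩, e₂, hlast, hwt'⟩,
          ⟨⟨fun _ => hex, fun h => absurd (hhc ▸ hcp) h⟩, hcca'⟩, by simp, by simp, ?_⟩
        rw [getLast?_cons_of_ne_nil _ ht'0, getLast?_cons_of_ne_nil _ ht0]
        exact hlst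
      · push_neg at hex
        have hbs : b ∈ s := List.mem_of_mem_head? (by simp [hb])
        have hbmem : b ∈ C ∪ G.antSet C := hcolS hcp b hbs
        have hbant : b ∈ G.antSet C := hbmem.resolve_left (hex b hbs)
        obtain ⟨hbu, hbC⟩ := hbant
        rw [Set.mem_iUnion₂] at hbu
        obtain ⟨c₀, hc₀C, hne, htg⟩ := hbu
        obtain ⟨l, z, hch, hzlast, hzC, hdropC⟩ := trunc G C htg.to_reflTransGen hc₀C
        have hs_eq : s = b :: s.tail := by
          cases s with
          | nil => simp at hb
          | cons a t2 =>
            simp only [List.head?_cons, Option.some_inj] at hb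
            simp [hb]
        obtain ⟨F, M, hF0, hFch, hFhd, ⟨e₁, zz, hFlast, hzz, hwaM⟩, sp1, sp2, sp4, sp3⟩ :=
          block G hsym C l b s.tail hch
            (fun z' hz' => by rw [hzlast] at hz'; cases hz'; exact hzC)
            hdropC
            (by rw [← hs_eq]; exact hsch)
            (fun u hu => hex u (by rw [hs_eq]; exact List.mem_cons_of_mem b hu))
        rw [← hs_eq] at hzz
        rw [hzz] at hlast
        have hzze : zz = e₂ := Option.some_inj.1 hlast
        subst hzze
        refine ⟨(c, F) :: (M ++ t'), ?_, ?_, by simp, by simp, ?_⟩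
        · exact ⟨hF0, hFch, ⟨b, hFhd, hconn⟩, e₁, hFlast,
            (walkAux_append G M t' e₁ j).2 ⟨zz, hwaM, hwt'⟩⟩
        · refine ⟨?_, (CCA_append C M t' none).2 ⟨sp3 _, hcca'⟩⟩
          cases M with
          | nil =>
            rw [show headConn ([] ++ t') none = headConn t' none from rfl, hhc]
            exact ⟨fun _ => sp1 rfl, fun h => absurd hcp h⟩
          | cons q M₂ =>
            have hq : q.1 = Conn.fwd := sp4 q rfl
            have hh : headConn ((q :: M₂) ++ t') none = some q.1 := by
              obtain ⟨q1, q2⟩ := q; rfl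
            rw [hh, hq]
            refine ⟨fun h => ?_, fun _ => sp2 (List.cons_ne_nil _ _)⟩
            exfalso
            obtain ⟨-, c', hc', hp⟩ := h
            simp only [Option.some_inj] at hc'
            subst hc'
            exact hp
        · rw [show (c, F) :: (M ++ t') = ((c, F) :: M) ++ t' from rfl,
            List.getLast?_append_of_ne_nil _ ht'0, getLast?_cons_of_ne_nil _ ht0]
          exact hlst
    · refine ⟨(c, s) :: t', ⟨hs0, hsch, ⟨b, hb, hconn⟩, e₂, hlast, hwt'⟩,
        ⟨⟨fun h => absurd (hhc ▸ h) hcp, fun _ => hncolS hcp⟩, hcca'⟩,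
        by simp, by simp, ?_⟩
      cases ht : t with
      | nil =>
        have ht' : t' = [] := hnil.2 ht
        subst ht
        subst ht'
        rfl
      | cons q t2 =>
        subst ht
        have ht'0 : t' ≠ [] := fun h => (List.cons_ne_nil q t2) (hnil.1 h)
        rw [getLast?_cons_of_ne_nil _ ht'0, getLast?_cons_of_ne_nil _ (List.cons_ne_nil q t2)]
        exact hlst

lemma partA (G : MixedGraph V) (hsym : ∀ a b, G.line a b → G.line b a) (C : Set V)
    (i j : V) (w : MWalk V) (hw : w.IsWalkFrom G i j) (hcc : w.cConnecting C) :
    ∃ w' : MWalk V, w'.IsWalkFrom G i j ∧ GoodWalk G C w' ∧ EndpointIdentical w w' := by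
  obtain ⟨h0, hch, hhd, e, hlst, hwa⟩ := hw
  obtain ⟨hfC, hcca⟩ := (cConnecting_iff w C).1 hcc
  obtain ⟨f', hf'ch, hf'nd, hf'hd, hf'lst, hf'sub⟩ := dedup_section w.first hch
  obtain ⟨rest', hwa', hga', hmap⟩ := dedupRest G hsym C j w.rest e hwa hcca
  refine ⟨⟨f', rest'⟩, ?_, ?_, ?_⟩
  · refine ⟨?_, hf'ch, by rw [hf'hd]; exact hhd, e, by rw [hf'lst]; exact hlst, hwa'⟩
    intro h
    have h2 : f' = [] := h
    rw [h2, hhd] at hf'hd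
    simp at hf'hd
  · rw [goodWalk_iff]
    exact ⟨hf'nd, fun x hx => hfC x (hf'sub x hx), hga'⟩
  · apply endpointIdentical_of
    · show rest'.head?.map Prod.fst = w.rest.head?.map Prod.fst
      rw [← List.head?_map, ← List.head?_map, hmap]
    · show rest'.getLast?.map Prod.fst = w.rest.getLast?.map Prod.fst
      rw [← List.getLast?_map, ← List.getLast?_map, hmap]

lemma partB (G : MixedGraph V) (hsym : ∀ a b, G.line a b → G.line b a) (C : Set V)
    (i j : V) (w : MWalk V) (hw : w.IsWalkFrom G i j) (hgw : GoodWalk G C w) :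
    ∃ w' : MWalk V, w'.IsWalkFrom G i j ∧ w'.cConnecting C ∧ EndpointIdentical w w' := by
  obtain ⟨h0, hch, hhd, e, hlst, hwa⟩ := hw
  obtain ⟨hfnd, hfC, hga⟩ := (goodWalk_iff G w C).1 hgw
  obtain ⟨rest', hwa', hcca', hnil, hhd', hlst'⟩ := assemble G hsym C j w.rest e hwa hga
  exact ⟨⟨w.first, rest'⟩, ⟨h0, hch, hhd, e, hlst, hwa'⟩,
    (cConnecting_iff _ C).2 ⟨hfC, hcca'⟩, endpointIdentical_of hhd' hlst'⟩

/-- There is a `c`-connecting walk between `i` and `j` given `C` iff there is a walk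
between `i` and `j` all of whose sections are paths, on which every node of every
collider section lies in `C ∪ ant(C)` and no node of any non-collider section lies in
`C`; moreover the two walks can be chosen to be endpoint-identical. -/
theorem stmt0 (G : MixedGraph V) (hG : G.IsCG) (C : Set V) (hC : C ⊆ G.nodes)
    (i j : V) (hi : i ∈ G.nodes) (hj : j ∈ G.nodes) :
    ((∃ w : MWalk V, w.IsWalkFrom G i j ∧ w.cConnecting C) ↔
      (∃ w : MWalk V, w.IsWalkFrom G i j ∧ GoodWalk G C w)) ∧
    (∀ w : MWalk V, w.IsWalkFrom G i j → w.cConnecting C →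
      ∃ w' : MWalk V, w'.IsWalkFrom G i j ∧ GoodWalk G C w' ∧ EndpointIdentical w w') ∧
    (∀ w : MWalk V, w.IsWalkFrom G i j → GoodWalk G C w →
      ∃ w' : MWalk V, w'.IsWalkFrom G i j ∧ w'.cConnecting C ∧
        EndpointIdentical w w') := by
  have hsym : ∀ a b, G.line a b → G.line b a := hG.1.1.1
  refine ⟨⟨?_, ?_⟩, ?_, ?_⟩
  · rintro ⟨w, hw, hcc⟩
    obtain ⟨w', hw', hg', -⟩ := partA G hsym C i j w hw hcc
    exact ⟨w', hw', hg'⟩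
  · rintro ⟨w, hw, hgw⟩
    obtain ⟨w', hw', hc', -⟩ := partB G hsym C i j w hw hgw
    exact ⟨w', hw', hc'⟩
  · exact fun w hw hcc => partA G hsym C i j w hw hcc
  · exact fun w hw hgw => partB G hsym C i j w hw hgw

end LWF
end

section
/- For every chain mixed graph G on node set V and every M ⊆ V, the graph α_CMG(G;M,∅) produced by the marginalization algorithm is a chain mixed graph. -/
namespace LWF

variable {V : Type*}

/-- Reflexive-transitive semi-directed reachability in `G`. -/
def Rch (G : MixedGraph V) : V → V → Prop := Relation.ReflTransGen G.sdStep

/-- `a` reaches `b` by a semi-directed walk containing at least one arrow. -/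
def ArR (G : MixedGraph V) (a b : V) : Prop :=
  ∃ x y, Rch G a x ∧ G.arrow x y ∧ Rch G y b

lemma arR_to_rch {G : MixedGraph V} {a b : V} (h : ArR G a b) : Rch G a b := by
  obtain ⟨x, y, hax, hxy, hyb⟩ := h
  exact hax.trans ((Relation.ReflTransGen.single
    (show G.sdStep x y from Or.inr hxy)).trans hyb)

lemma chain_rch {G : MixedGraph V} (hsym : ∀ i j, G.line i j → G.line j i) :
    ∀ (p : List V) (a b : V), p.Chain' G.line → p.head? = some a →
      p.getLast? = some b → Rch G a b ∧ Rch G b a := by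
  intro p
  induction p with
  | nil => intro a b _ h; simp at h
  | cons x q ih =>
    intro a b hch hh hl
    simp only [List.head?_cons, Option.some.injEq] at hh; subst hh
    cases q with
    | nil =>
      simp only [List.getLast?_singleton, Option.some.injEq] at hl; subst hl
      exact ⟨Relation.ReflTransGen.refl, Relation.ReflTransGen.refl⟩
    | cons y r =>
      simp only [List.Chain', List.isChain_cons_cons] at hch
      obtain ⟨hxy, hq⟩ := hch
      have hl' : (y :: r).getLast? = some b := by
        simpa [List.getLast?_cons_cons] using hl
      obtain ⟨h1, h2⟩ := ih y b hq rfl hl'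
      exact ⟨(Relation.ReflTransGen.single
          (show G.sdStep x y from Or.inl hxy)).trans h1,
        h2.trans (Relation.ReflTransGen.single
          (show G.sdStep y x from Or.inl (hsym _ _ hxy)))⟩

lemma head_mem_of_lineSection {G : MixedGraph V} {p : List V} {a b : V}
    (h : G.lineSection p a b) : a ∈ p := by
  obtain ⟨hne, _, _, hh, _⟩ := h
  cases p with
  | nil => exact absurd rfl hne
  | cons x q =>
    simp only [List.head?_cons, Option.some.injEq] at hh
    subst hh; exact List.mem_cons_self

/-- The invariant carried by the edges after steps 1 and 2 of marginalization. -/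
def MInv (G : MixedGraph V) : EKind → V → V → Prop
  | .ln, i, j => (Rch G i j ∧ Rch G j i) ∧ i ≠ j ∧ i ∈ G.nodes ∧ j ∈ G.nodes
  | .ar, i, j => ArR G i j ∧ i ∈ G.nodes ∧ j ∈ G.nodes
  | .bi, i, j => i ≠ j ∧ i ∈ G.nodes ∧ j ∈ G.nodes

lemma margCl_inv (G : MixedGraph V) (hG : G.IsCMG) (M : Set V) :
    ∀ k i j, MargCl (G.margStep1 M) M k i j → MInv G k i j := by
  obtain ⟨⟨lsym, lirr, airr, csym, cirr, lnod, anod, cnod⟩, hcyc⟩ := hG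
  intro k i j h
  induction h with
  | @base_ln i j h =>
    refine ⟨⟨Relation.ReflTransGen.single (show G.sdStep i j from Or.inl h),
      Relation.ReflTransGen.single
        (show G.sdStep j i from Or.inl (lsym _ _ h))⟩, ?_, lnod _ _ h⟩
    rintro rfl; exact lirr _ h
  | @base_ar i j h =>
    rcases h with h | ⟨m, _, p, t, hmb, hsec, hat, _⟩
    · exact ⟨⟨i, j, Relation.ReflTransGen.refl, h, Relation.ReflTransGen.refl⟩,
        anod _ _ h⟩
    · obtain ⟨_, hch, _, hh, hl⟩ := hsec
      have := chain_rch lsym p _ _ hch hh hl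
      exact ⟨⟨i, t, Relation.ReflTransGen.refl, hat, this.2⟩,
        (anod _ _ hat).1, (anod _ _ hmb).2⟩
  | @base_bi i j h =>
    rcases h with h | h | h
    · exact ⟨fun hij => cirr _ (hij ▸ h), cnod _ _ h⟩
    · obtain ⟨m, _, p, t, hmi, hsec, htj, hjp, _, _⟩ := h
      refine ⟨?_, (anod _ _ hmi).2, (cnod _ _ htj).2⟩
      rintro rfl; exact hjp (head_mem_of_lineSection hsec)
    · obtain ⟨m, _, p, t, hmj, hsec, hti, hip, _, _⟩ := h
      refine ⟨?_, (cnod _ _ hti).2, (anod _ _ hmj).2⟩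
      rintro rfl; exact hip (head_mem_of_lineSection hsec)
  | symm_ln _ ih => exact ⟨⟨ih.1.2, ih.1.1⟩, ih.2.1.symm, ih.2.2.2, ih.2.2.1⟩
  | symm_bi _ ih => exact ⟨ih.1.symm, ih.2.2, ih.2.1⟩
  | r1 _ _ _ _ ihjm ihmi =>
    obtain ⟨⟨x, y, h1, h2, h3⟩, hjn, _⟩ := ihjm
    obtain ⟨hmi, _, hin⟩ := ihmi
    exact ⟨⟨x, y, h1, h2, h3.trans (arR_to_rch hmi)⟩, hjn, hin⟩
  | r2 _ _ _ _ ihmj ihmi =>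
    obtain ⟨⟨hmj, hjm⟩, _, _, hjn⟩ := ihmj
    obtain ⟨⟨x, y, h1, h2, h3⟩, _, hin⟩ := ihmi
    exact ⟨⟨x, y, hjm.trans h1, h2, h3⟩, hjn, hin⟩
  | r3 _ hij _ _ ihim ihmj =>
    exact ⟨hij, ihim.2.1, ihmj.2.2.2⟩
  | r4 _ hij _ _ ihmi ihmj => exact ⟨hij, ihmi.2.2, ihmj.2.2⟩
  | r5 _ hij _ _ ihmi ihmj => exact ⟨hij, ihmi.2.2, ihmj.2.2⟩
  | r6 _ _ _ _ ihim ihjm =>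
    obtain ⟨⟨him, hmi⟩, _, hin, _⟩ := ihim
    obtain ⟨⟨x, y, h1, h2, h3⟩, hjn, _⟩ := ihjm
    exact ⟨⟨x, y, h1, h2, h3.trans hmi⟩, hjn, hin⟩
  | r7 _ hij _ _ ihim ihmj =>
    exact ⟨⟨ihim.1.1.trans ihmj.1.1, ihmj.1.2.trans ihim.1.2⟩, hij,
      ihim.2.2.1, ihmj.2.2.2⟩

/-- Graphs generated by the marginalization algorithm are chain mixed graphs. -/
theorem stmt1 (G : MixedGraph V) (hG : G.IsCMG) (M : Set V) (hM : M ⊆ G.nodes) :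
    (G.alphaMarg M).IsCMG := by
  have inv := margCl_inv G hG M
  obtain ⟨⟨lsym, lirr, airr, csym, cirr, lnod, anod, cnod⟩, hcyc⟩ := hG
  have hln : ∀ i j, (G.alphaMarg M).line i j →
      MInv G EKind.ln i j ∧ i ∉ M ∧ j ∉ M := by
    intro i j h
    obtain ⟨h, hi, hj⟩ :=
      (h : MargCl (G.margStep1 M) M EKind.ln i j ∧ i ∉ M ∧ j ∉ M)
    exact ⟨inv _ _ _ h, hi, hj⟩
  have har : ∀ i j, (G.alphaMarg M).arrow i j →
      MInv G EKind.ar i j ∧ i ∉ M ∧ j ∉ M := by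
    intro i j h
    obtain ⟨h, hi, hj⟩ :=
      (h : MargCl (G.margStep1 M) M EKind.ar i j ∧ i ∉ M ∧ j ∉ M)
    exact ⟨inv _ _ _ h, hi, hj⟩
  have hbi : ∀ i j, (G.alphaMarg M).arc i j →
      MInv G EKind.bi i j ∧ i ∉ M ∧ j ∉ M := by
    intro i j h
    obtain ⟨h, hi, hj⟩ :=
      (h : MargCl (G.margStep1 M) M EKind.bi i j ∧ i ∉ M ∧ j ∉ M)
    exact ⟨inv _ _ _ h, hi, hj⟩
  -- no ArR a a in G
  have noArR : ∀ a, ¬ ArR G a a := by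
    rintro a ⟨x, y, hax, hxy, hya⟩
    exact hcyc x y hxy (hya.trans hax)
  -- semi-directed steps in H imply Rch in G
  have hstep : ∀ a b, (G.alphaMarg M).sdStep a b → Rch G a b := by
    rintro a b (h | h)
    · exact ((hln a b h).1).1.1
    · exact arR_to_rch ((har a b h).1).1
  have hrch : ∀ a b, Relation.ReflTransGen (G.alphaMarg M).sdStep a b →
      Rch G a b := by
    intro a b h
    induction h with
    | refl => exact Relation.ReflTransGen.refl
    | tail _ hstep' ih => exact ih.trans (hstep _ _ hstep')
  constructor
  · refine ⟨?_, ?_, ?_, ?_, ?_, ?_, ?_, ?_⟩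
    · intro i j h
      obtain ⟨h, hi, hj⟩ :=
        (h : MargCl (G.margStep1 M) M EKind.ln i j ∧ i ∉ M ∧ j ∉ M)
      exact ⟨MargCl.symm_ln h, hj, hi⟩
    · intro i h; exact ((hln i i h).1).2.1 rfl
    · intro i h; exact noArR i ((har i i h).1).1
    · intro i j h
      obtain ⟨h, hi, hj⟩ :=
        (h : MargCl (G.margStep1 M) M EKind.bi i j ∧ i ∉ M ∧ j ∉ M)
      exact ⟨MargCl.symm_bi h, hj, hi⟩
    · intro i h; exact ((hbi i i h).1).1 rfl
    · rintro i j h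
      obtain ⟨⟨_, _, hi, hj⟩, hiM, hjM⟩ := hln i j h
      exact ⟨⟨hi, hiM⟩, hj, hjM⟩
    · rintro i j h
      obtain ⟨⟨_, hi, hj⟩, hiM, hjM⟩ := har i j h
      exact ⟨⟨hi, hiM⟩, hj, hjM⟩
    · rintro i j h
      obtain ⟨⟨_, hi, hj⟩, hiM, hjM⟩ := hbi i j h
      exact ⟨⟨hi, hiM⟩, hj, hjM⟩
  · intro a b hab hba
    obtain ⟨⟨⟨x, y, hax, hxy, hyb⟩, _, _⟩, _, _⟩ := har a b hab
    exact hcyc x y hxy ((hyb.trans (hrch b a hba)).trans hax)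

end LWF
end

section
/- For every chain mixed graph G on node set V and every C ⊆ V, the graph α_CMG(G;∅,C) produced by the conditioning algorithm is a chain mixed graph. -/
open Relation

private lemma LWF.mem_of_head?' {V : Type*} {p : List V} {a : V} (h : p.head? = some a) :
    a ∈ p := by cases p <;> simp_all

private lemma LWF.mem_of_getLast?' {V : Type*} {p : List V} {a : V} (h : p.getLast? = some a) :
    a ∈ p := List.mem_of_mem_getLast? (by simp [h])

namespace LWF

variable {V : Type*}

private lemma chain_line_R {G : MixedGraph V} (hsym : ∀ i j, G.line i j → G.line j i) :
    ∀ (p : List V), p.Chain' G.line → ∀ a b, p.head? = some a → p.getLast? = some b →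
      ReflTransGen G.sdStep a b ∧ ReflTransGen G.sdStep b a := by
  intro p
  induction p with
  | nil => intro _ a b h; simp at h
  | cons x t ih =>
    intro hch a b ha hb
    simp only [List.head?_cons, Option.some.injEq] at ha
    subst ha
    cases t with
    | nil =>
      simp only [List.getLast?_singleton, Option.some.injEq] at hb
      subst hb; exact ⟨.refl, .refl⟩
    | cons y s =>
      simp only [List.Chain', List.isChain_cons_cons] at hch
      rw [List.getLast?_cons_cons] at hb
      obtain ⟨h1, h2⟩ := ih hch.2 y b rfl hb
      exact ⟨.head (Or.inl hch.1) h1, h2.tail (Or.inl (hsym _ _ hch.1))⟩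

private lemma step_S {G : MixedGraph V} {C : Set V} {x y : V}
    (h : G.sdStep x y) (hy : y ∈ C ∪ G.antSet C) : x ∈ C ∪ G.antSet C := by
  by_cases hxC : x ∈ C
  · exact Or.inl hxC
  rcases hy with hy | hy
  · refine Or.inr ⟨Set.mem_biUnion hy ⟨fun he => hxC (he ▸ hy), .single h⟩, hxC⟩
  · obtain ⟨hy1, hyC⟩ := hy
    rw [Set.mem_iUnion₂] at hy1
    obtain ⟨c, hc, hne, htg⟩ := hy1
    refine Or.inr ⟨Set.mem_biUnion hc ⟨?_, htg.head h⟩, hxC⟩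
    rintro rfl; exact hxC hc

private lemma rtg_S {G : MixedGraph V} {C : Set V} {x y : V}
    (h : ReflTransGen G.sdStep x y) : y ∈ C ∪ G.antSet C → x ∈ C ∪ G.antSet C := by
  induction h with
  | refl => exact id
  | tail _ h2 ih => exact fun hy => ih (step_S h2 hy)

private lemma H_arrow {G : MixedGraph V} {S : Set V}
    (hsym : ∀ i j, G.line i j → G.line j i) {a b : V}
    (h : (G.condStep2 S).arrow a b) :
    ∃ t, G.arrow a t ∧ ReflTransGen G.sdStep t b := by
  rcases h with h | ⟨s, hs, p, t, harc, hsec, harr, _⟩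
  · exact ⟨b, h, .refl⟩
  · obtain ⟨_, hch, _, hh, hl⟩ := hsec
    exact ⟨t, harr, (chain_line_R hsym p hch b t hh hl).2⟩

private lemma H_arrow_ne {G : MixedGraph V} {S : Set V} (hm : G.IsMixedGraph) {a : V}
    (h : (G.condStep2 S).arrow a a) : False := by
  rcases h with h | ⟨s, hs, p, t, harc, hsec, harr, hap, _⟩
  · exact hm.2.2.1 a h
  · exact hap (mem_of_head?' hsec.2.2.2.1)

private lemma H_arrow_nodes {G : MixedGraph V} {S : Set V} (hm : G.IsMixedGraph) {a b : V}
    (h : (G.condStep2 S).arrow a b) : a ∈ G.nodes ∧ b ∈ G.nodes := by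
  rcases h with h | ⟨s, hs, p, t, harc, hsec, harr, _⟩
  · exact hm.2.2.2.2.2.2.1 a b h
  · exact ⟨(hm.2.2.2.2.2.2.1 a t harr).1, (hm.2.2.2.2.2.2.2 s b harc).2⟩

private lemma H_arc_ne {G : MixedGraph V} {S : Set V} (hm : G.IsMixedGraph) {a : V}
    (h : (G.condStep2 S).arc a a) : False := by
  rcases h with h | ⟨s, hs, p, t, harc, hsec, harc2, hjp, _⟩ |
    ⟨s, hs, p, t, harc, hsec, harc2, hjp, _⟩
  · exact hm.2.2.2.2.1 a h
  · exact hjp (mem_of_head?' hsec.2.2.2.1)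
  · exact hjp (mem_of_head?' hsec.2.2.2.1)

private lemma H_arc_nodes {G : MixedGraph V} {S : Set V} (hm : G.IsMixedGraph) {a b : V}
    (h : (G.condStep2 S).arc a b) : a ∈ G.nodes ∧ b ∈ G.nodes := by
  rcases h with h | ⟨s, hs, p, t, harc, hsec, harc2, _⟩ |
    ⟨s, hs, p, t, harc, hsec, harc2, _⟩
  · exact hm.2.2.2.2.2.2.2 a b h
  · exact ⟨(hm.2.2.2.2.2.2.2 s a harc).2, (hm.2.2.2.2.2.2.2 t b harc2).2⟩
  · exact ⟨(hm.2.2.2.2.2.2.2 t a harc2).2, (hm.2.2.2.2.2.2.2 s b harc).2⟩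

/-- The inductive invariant carried by the edges produced in step 3. -/
private def Inv (G : MixedGraph V) (S : Set V) : EKind → V → V → Prop
  | .ln, i, j => i ≠ j ∧ i ∈ G.nodes ∧ j ∈ G.nodes ∧
      ((ReflTransGen G.sdStep i j ∧ ReflTransGen G.sdStep j i) ∨ (i ∈ S ∧ j ∈ S))
  | .ar, a, b => a ≠ b ∧ a ∈ G.nodes ∧ b ∈ G.nodes ∧ (b ∈ S → a ∈ S) ∧
      (a ∉ S → ∃ t, G.arrow a t ∧ ReflTransGen G.sdStep t b)
  | .bi, i, j => i ≠ j ∧ i ∈ G.nodes ∧ j ∈ G.nodes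

private lemma condCl_inv {G : MixedGraph V} {C : Set V} (hm : G.IsMixedGraph)
    {k : EKind} {i j : V}
    (h : CondCl (G.condStep2 (C ∪ G.antSet C)) (C ∪ G.antSet C) k i j) :
    Inv G (C ∪ G.antSet C) k i j := by
  induction h with
  | @base_ln i j h =>
    have h' : G.line i j := h
    refine ⟨?_, (hm.2.2.2.2.2.1 i j h').1, (hm.2.2.2.2.2.1 i j h').2,
      Or.inl ⟨.single (Or.inl h'), .single (Or.inl (hm.1 i j h'))⟩⟩
    rintro rfl; exact hm.2.1 i h'
  | @base_ar i j h =>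
    obtain ⟨t, hat, hR⟩ := H_arrow hm.1 h
    have hRij : ReflTransGen G.sdStep i j := .head (Or.inr hat) hR
    refine ⟨?_, (H_arrow_nodes hm h).1, (H_arrow_nodes hm h).2,
      fun hj => rtg_S hRij hj, fun _ => ⟨t, hat, hR⟩⟩
    rintro rfl; exact H_arrow_ne hm h
  | @base_bi i j h =>
    refine ⟨?_, (H_arc_nodes hm h).1, (H_arc_nodes hm h).2⟩
    rintro rfl; exact H_arc_ne hm h
  | symm_ln h ih =>
    exact ⟨ih.1.symm, ih.2.2.1, ih.2.1,
      ih.2.2.2.elim (fun ⟨x, y⟩ => Or.inl ⟨y, x⟩) (fun ⟨x, y⟩ => Or.inr ⟨y, x⟩)⟩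
  | symm_bi h ih => exact ⟨ih.1.symm, ih.2.2, ih.2.1⟩
  | @rLL i j a b p hsec hsub hne hip hjp hia hjb iha ihb =>
    have haS : a ∈ C ∪ G.antSet C := hsub a (mem_of_head?' hsec.2.2.2.1)
    have hbS : b ∈ C ∪ G.antSet C := hsub b (mem_of_getLast?' hsec.2.2.2.2)
    exact ⟨hne, iha.2.1, ihb.2.1, Or.inr ⟨iha.2.2.2.1 haS, ihb.2.2.2.1 hbS⟩⟩
  | @rBL i j a b p hsec hsub hne hip hjp hia hjb iha ihb =>
    have hbS : b ∈ C ∪ G.antSet C := hsub b (mem_of_getLast?' hsec.2.2.2.2)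
    have hjS : j ∈ C ∪ G.antSet C := ihb.2.2.2.1 hbS
    exact ⟨hne.symm, ihb.2.1, iha.2.1, fun _ => hjS, fun hj => absurd hjS hj⟩
  | @rBB i j a b p hsec hsub hne hip hjp hia hjb iha ihb =>
    exact ⟨hne, iha.2.1, ihb.2.1⟩

end LWF
namespace LWF

variable {V : Type*}

/-- Graphs generated by the conditioning algorithm are chain mixed graphs. -/
theorem stmt7 (G : MixedGraph V) (hG : G.IsCMG) (C : Set V) (hC : C ⊆ G.nodes) :
    (G.alphaCond C).IsCMG := by
  obtain ⟨hm, hcyc⟩ := hG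
  have hinv : ∀ {k i j}, CondCl (G.condStep2 (C ∪ G.antSet C)) (C ∪ G.antSet C) k i j →
      Inv G (C ∪ G.antSet C) k i j := fun h => condCl_inv hm h
  constructor
  · refine ⟨?_, ?_, ?_, ?_, ?_, ?_, ?_, ?_⟩
    · rintro i j ⟨h, hi, hj⟩
      refine ⟨?_, hj, hi⟩
      rcases h with h | ⟨h, hs⟩ | ⟨h, hs⟩ | ⟨h, h1, h2⟩
      · exact Or.inl (CondCl.symm_ln h)
      · exact Or.inr (Or.inr (Or.inl ⟨h, hs⟩))
      · exact Or.inr (Or.inl ⟨h, hs⟩)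
      · exact Or.inr (Or.inr (Or.inr ⟨CondCl.symm_bi h, h2, h1⟩))
    · rintro i ⟨h, -, -⟩
      rcases h with h | ⟨h, -⟩ | ⟨h, -⟩ | ⟨h, -, -⟩ <;> exact (hinv h).1 rfl
    · rintro i ⟨h, -, -⟩
      rcases h with ⟨h, -⟩ | ⟨h, -, -⟩ <;> exact (hinv h).1 rfl
    · rintro i j ⟨⟨h, h1, h2⟩, hi, hj⟩
      exact ⟨⟨CondCl.symm_bi h, h2, h1⟩, hj, hi⟩
    · rintro i ⟨⟨h, -, -⟩, -, -⟩
      exact (hinv h).1 rfl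
    · rintro i j ⟨h, hi, hj⟩
      rcases h with h | ⟨h, -⟩ | ⟨h, -⟩ | ⟨h, -, -⟩
      · exact ⟨⟨(hinv h).2.1, hi⟩, ⟨(hinv h).2.2.1, hj⟩⟩
      · exact ⟨⟨(hinv h).2.1, hi⟩, ⟨(hinv h).2.2.1, hj⟩⟩
      · exact ⟨⟨(hinv h).2.2.1, hi⟩, ⟨(hinv h).2.1, hj⟩⟩
      · exact ⟨⟨(hinv h).2.1, hi⟩, ⟨(hinv h).2.2, hj⟩⟩
    · rintro i j ⟨h, hi, hj⟩
      rcases h with ⟨h, -⟩ | ⟨h, -, -⟩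
      · exact ⟨⟨(hinv h).2.1, hi⟩, ⟨(hinv h).2.2.1, hj⟩⟩
      · exact ⟨⟨(hinv h).2.1, hi⟩, ⟨(hinv h).2.2, hj⟩⟩
    · rintro i j ⟨⟨h, -, -⟩, hi, hj⟩
      exact ⟨⟨(hinv h).2.1, hi⟩, ⟨(hinv h).2.2, hj⟩⟩
  · rintro a b ⟨hab, -, -⟩ hwalk
    have hw : ReflTransGen ((G.condCore C).removeHeads (C ∪ G.antSet C)).sdStep b a :=
      ReflTransGen.mono (r := (G.alphaCond C).sdStep) (fun x y (h : (G.alphaCond C).sdStep x y) =>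
        h.elim (fun ⟨h', _, _⟩ => Or.inl h') (fun ⟨h', _, _⟩ => Or.inr h')) b a hwalk
    have key : ∀ {x y}, ReflTransGen ((G.condCore C).removeHeads (C ∪ G.antSet C)).sdStep x y →
        x ∉ C ∪ G.antSet C → y ∉ C ∪ G.antSet C ∧ ReflTransGen G.sdStep x y := by
      intro x y h
      induction h with
      | refl => exact fun hx => ⟨hx, .refl⟩
      | @tail c y h1 h2 ih =>
        intro hx
        obtain ⟨hcS, hR⟩ := ih hx
        have hstep : y ∉ C ∪ G.antSet C ∧ ReflTransGen G.sdStep c y := by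
          rcases h2 with hl | ha
          · rcases hl with h' | ⟨h', hs⟩ | ⟨h', hs⟩ | ⟨h', h1', h2'⟩
            · rcases (hinv h').2.2.2 with ⟨r1, r2⟩ | ⟨h1', h2'⟩
              · exact ⟨fun hyS => hcS (rtg_S r1 hyS), r1⟩
              · exact absurd h1' hcS
            · exact absurd ((hinv h').2.2.2.1 hs) hcS
            · exact absurd hs hcS
            · exact absurd h1' hcS
          · rcases ha with ⟨h', hyS⟩ | ⟨h', hcS', -⟩
            · obtain ⟨t, hat, hR'⟩ := (hinv h').2.2.2.2 hcS
              exact ⟨hyS, .head (Or.inr hat) hR'⟩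
            · exact absurd hcS' hcS
        exact ⟨hstep.1, hR.trans hstep.2⟩
    have hbS : b ∉ C ∪ G.antSet C := by
      rcases hab with ⟨-, hbS⟩ | ⟨-, -, hbS⟩ <;> exact hbS
    obtain ⟨haS, hR⟩ := key hw hbS
    rcases hab with ⟨h, -⟩ | ⟨-, haS', -⟩
    · obtain ⟨t, hat, hR'⟩ := (hinv h).2.2.2.2 haS
      exact hcyc a t hat (hR'.trans hR)
    · exact haS haS'

end LWF
end
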